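/- Let X = w_1, ..., w_n be a sequence of positive reals, p ≥ 1 an integer, and B a real such that there exists a partition of X into at most p contiguous blocks each of total weight at most B. Then the greedy left-to-right procedure that starts a new block exactly when adding the next element would exceed B produces at most p blocks. -/

import Mathlib

open Finset

/-- The greedy (Probe) cut positions: `greedyCuts w n B k` is the position reached after `k`
maximal blocks, where each block is extended as long as its total weight stays at most `B`. -/
noncomputable def greedyCuts (w : ℕ → ℝ) (n : ℕ) (B : ℝ) : ℕ → ℕ
  | 0 => 0
  | k + 1 =>
      sSup {j | j ≤ n ∧ greedyCuts w n B k ≤ j ∧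
        ∑ i ∈ Finset.Ico (greedyCuts w n B k) j, w i ≤ B}

/-- Probe correctness: if the sequence `w_0, …, w_{n-1}` of positive weights admits a partition
into at most `p` contiguous blocks each of weight at most `B`, then the greedy left-to-right
procedure that starts a new block exactly when adding the next element would exceed `B`
produces at most `p` blocks, i.e. it reaches position `n` within `p` blocks. -/
theorem probe_correct (w : ℕ → ℝ) (hw : ∀ i, 0 < w i) (n p : ℕ) (hp : 1 ≤ p) (B : ℝ)
    (h : ∃ s : Fin (p + 1) → ℕ, Monotone s ∧ s 0 = 0 ∧ s (Fin.last p) = n ∧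
      ∀ j : Fin p, ∑ i ∈ Finset.Ico (s j.castSucc) (s j.succ), w i ≤ B) :
    greedyCuts w n B p = n := by
  obtain ⟨s, hmono, hs0, hslast, hblock⟩ := h
  -- B is nonnegative
  have hB : 0 ≤ B := by
    have j0 : Fin p := ⟨0, hp⟩
    refine le_trans ?_ (hblock j0)
    exact Finset.sum_nonneg fun i _ => (hw i).le
  have key : ∀ k, ∀ hk : k ≤ p,
      greedyCuts w n B k ≤ n ∧ s ⟨k, Nat.lt_succ_of_le hk⟩ ≤ greedyCuts w n B k := by
    intro k
    induction k with
    | zero =>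
      intro hk
      constructor
      · simp [greedyCuts]
      · have : s ⟨0, Nat.lt_succ_of_le hk⟩ = s 0 := rfl
        simp [greedyCuts, this, hs0]
    | succ k ih =>
      intro hk
      have hk' : k ≤ p := Nat.le_of_succ_le hk
      obtain ⟨ihn, ihs⟩ := ih hk'
      set a := greedyCuts w n B k with ha
      set S : Set ℕ := {j | j ≤ n ∧ a ≤ j ∧ ∑ i ∈ Finset.Ico a j, w i ≤ B} with hS
      have hbdd : BddAbove S := ⟨n, fun x hx => hx.1⟩
      have haS : a ∈ S := ⟨ihn, le_refl a, by simp [hB]⟩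
      have hgs : greedyCuts w n B (k + 1) = sSup S := rfl
      have hsup_mem : sSup S ∈ S := Nat.sSup_mem ⟨a, haS⟩ hbdd
      refine ⟨hgs ▸ hsup_mem.1, ?_⟩
      set b := s ⟨k + 1, Nat.lt_succ_of_le hk⟩ with hb
      by_cases hba : b ≤ a
      · exact hgs ▸ le_trans hba (le_csSup hbdd haS)
      · push_neg at hba
        have hbn : b ≤ n := by
          rw [← hslast]
          exact hmono (Fin.le_last _)
        have hj : (k : ℕ) < p := hk
        have hsum : ∑ i ∈ Finset.Ico a b, w i ≤ B := by
          have hsub : Finset.Ico a b ⊆ Finset.Ico (s ⟨k, Nat.lt_succ_of_le hk'⟩) b :=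
            Finset.Ico_subset_Ico ihs le_rfl
          refine le_trans (Finset.sum_le_sum_of_subset_of_nonneg hsub
            fun i _ _ => (hw i).le) ?_
          have := hblock ⟨k, hj⟩
          have h1 : (⟨k, hj⟩ : Fin p).castSucc = ⟨k, Nat.lt_succ_of_le hk'⟩ := rfl
          have h2 : (⟨k, hj⟩ : Fin p).succ = ⟨k + 1, Nat.lt_succ_of_le hk⟩ := rfl
          rwa [h1, h2] at this
        have hbS : b ∈ S := ⟨hbn, hba.le, hsum⟩
        exact hgs ▸ le_csSup hbdd hbS
  obtain ⟨h1, h2⟩ := key p le_rfl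
  have : s ⟨p, Nat.lt_succ_of_le le_rfl⟩ = s (Fin.last p) := rfl
  rw [this, hslast] at h2
  exact le_antisymm h1 h2
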